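/- Let Γ be a real symmetric positive-definite 3×3 matrix with spectral decomposition Γ = Σ_a Γ_a² N̄_a N̄_aᵀ, where {N̄_a} is an orthonormal basis of ℝ³ and the Γ_a > 0 are pairwise distinct, and let E^v : (0,∞) → ℝ be differentiable with (E^v)' > 0 everywhere; let 𝕼^v be the projection operator associated with (Γ_a; N̄_a; E^v). Let C be a real symmetric positive-definite 3×3 matrix with spectral decomposition C = Σ_a λ_a² N_a N_aᵀ, with {N_a} orthonormal and the λ_a > 0 pairwise distinct, let E : (0,∞) → ℝ be differentiable with E' > 0 everywhere, and let 𝕼 be the projection operator associated with (λ_a; N_a; E). If a real symmetric 3×3 matrix T satisfies 𝕼^v(T) = 0 (the equilibrium condition Q = O), then T = 0, and consequently the non-equilibrium stress S^neq := 𝕼(T) vanishes: S^neq = O. -/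

import Mathlib

open Matrix Finset

/-- The projection operator of Hill's framework associated with principal values `a`,
principal directions `V`, a scale function `f` and its derivative `f'`. -/
noncomputable def projOp (a : Fin 3 → ℝ) (V : Fin 3 → Fin 3 → ℝ) (f f' : ℝ → ℝ)
    (A : Matrix (Fin 3) (Fin 3) ℝ) : Matrix (Fin 3) (Fin 3) ℝ :=
  (∑ i, ((f' (a i) / a i) * (V i ⬝ᵥ A *ᵥ V i)) • vecMulVec (V i) (V i)) +
    ∑ i, ∑ j ∈ univ.filter (fun j => i < j),
      ((2 * (f (a i) - f (a j)) / ((a i) ^ 2 - (a j) ^ 2)) * (V i ⬝ᵥ A *ᵥ V j)) •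
        (vecMulVec (V i) (V j) + vecMulVec (V j) (V i))

lemma dot_vmv (x u v y : Fin 3 → ℝ) :
    x ⬝ᵥ (vecMulVec u v) *ᵥ y = (x ⬝ᵥ u) * (v ⬝ᵥ y) := by
  simp [vecMulVec, mulVec, dotProduct, Finset.mul_sum, Finset.sum_mul, mul_assoc]
  exact Finset.sum_comm

noncomputable def dotL (x y : Fin 3 → ℝ) : Matrix (Fin 3) (Fin 3) ℝ →ₗ[ℝ] ℝ where
  toFun A := x ⬝ᵥ A *ᵥ y
  map_add' A B := by simp [add_mulVec, dotProduct_add]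
  map_smul' c A := by simp [smul_mulVec, dotProduct_smul, smul_eq_mul]

lemma dot_add_mulVec (x y : Fin 3 → ℝ) (A B : Matrix (Fin 3) (Fin 3) ℝ) :
    x ⬝ᵥ (A + B) *ᵥ y = x ⬝ᵥ A *ᵥ y + x ⬝ᵥ B *ᵥ y := by
  simp [add_mulVec, dotProduct_add]

lemma dot_smul_mulVec (x y : Fin 3 → ℝ) (c : ℝ) (A : Matrix (Fin 3) (Fin 3) ℝ) :
    x ⬝ᵥ (c • A) *ᵥ y = c * (x ⬝ᵥ A *ᵥ y) := by
  simp [smul_mulVec, dotProduct_smul, smul_eq_mul]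

lemma dot_sum_mulVec {ι : Type*} (s : Finset ι) (x y : Fin 3 → ℝ)
    (A : ι → Matrix (Fin 3) (Fin 3) ℝ) :
    x ⬝ᵥ (∑ i ∈ s, A i) *ᵥ y = ∑ i ∈ s, x ⬝ᵥ (A i) *ᵥ y :=
  map_sum (dotL x y) A s

lemma projOp_dot (a : Fin 3 → ℝ) (V : Fin 3 → Fin 3 → ℝ) (f f' : ℝ → ℝ)
    (T : Matrix (Fin 3) (Fin 3) ℝ)
    (hON : ∀ i j, V i ⬝ᵥ V j = if i = j then (1:ℝ) else 0) (k l : Fin 3) :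
    V k ⬝ᵥ (projOp a V f f' T) *ᵥ V l =
      (∑ i, (f' (a i) / a i * (V i ⬝ᵥ T *ᵥ V i)) *
        ((if k = i then (1:ℝ) else 0) * (if i = l then (1:ℝ) else 0))) +
      ∑ i, ∑ j ∈ univ.filter (fun j => i < j),
        (2 * (f (a i) - f (a j)) / ((a i)^2 - (a j)^2) * (V i ⬝ᵥ T *ᵥ V j)) *
          ((if k = i then (1:ℝ) else 0) * (if j = l then (1:ℝ) else 0) +
           (if k = j then (1:ℝ) else 0) * (if i = l then (1:ℝ) else 0)) := by
  simp only [projOp, dot_add_mulVec, dot_sum_mulVec, dot_smul_mulVec, dot_vmv, hON]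

lemma key_eval (g : Fin 3 → ℝ) (d : Fin 3 → Fin 3 → ℝ) (k l : Fin 3) :
    ((∑ i, g i * ((if k = i then (1:ℝ) else 0) * (if i = l then 1 else 0))) +
      ∑ i, ∑ j ∈ univ.filter (fun j => i < j), d i j *
        ((if k = i then (1:ℝ) else 0) * (if j = l then 1 else 0) +
         (if k = j then (1:ℝ) else 0) * (if i = l then 1 else 0)))
    = if k = l then g k else (if k < l then d k l else d l k) := by
  fin_cases k <;> fin_cases l <;>
    simp (config := { decide := true }) [Fin.sum_univ_three, Finset.sum_filter]

/-- If the stress-like tensor `T` satisfies the equilibrium condition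
`𝕼ᵛ(T) = O`, where `𝕼ᵛ` is the projection operator built from the spectral data of the
internal state variable `Γ`, then `T = O`; consequently the non-equilibrium stress
`Sⁿᵉᑫ = 𝕼(T)` (with `𝕼` built from the spectral data of `C`) vanishes. -/
theorem nonequilibrium_stress_vanishes
    (Γ : Matrix (Fin 3) (Fin 3) ℝ) (Ga : Fin 3 → ℝ) (Nbar : Fin 3 → Fin 3 → ℝ)
    (hΓ : Γ = ∑ i, ((Ga i) ^ 2) • vecMulVec (Nbar i) (Nbar i))
    (hGpos : ∀ i, 0 < Ga i) (hGdist : ∀ i j, i ≠ j → Ga i ≠ Ga j)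
    (hGON : ∀ i j, Nbar i ⬝ᵥ Nbar j = if i = j then (1 : ℝ) else 0)
    (Ev Ev' : ℝ → ℝ)
    (hEv : ∀ x : ℝ, 0 < x → HasDerivAt Ev (Ev' x) x)
    (hEv' : ∀ x : ℝ, 0 < x → 0 < Ev' x)
    (C : Matrix (Fin 3) (Fin 3) ℝ) (lam : Fin 3 → ℝ) (N : Fin 3 → Fin 3 → ℝ)
    (hC : C = ∑ i, ((lam i) ^ 2) • vecMulVec (N i) (N i))
    (hpos : ∀ i, 0 < lam i) (hdist : ∀ i j, i ≠ j → lam i ≠ lam j)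
    (hON : ∀ i j, N i ⬝ᵥ N j = if i = j then (1 : ℝ) else 0)
    (E E' : ℝ → ℝ)
    (hE : ∀ x : ℝ, 0 < x → HasDerivAt E (E' x) x)
    (hE' : ∀ x : ℝ, 0 < x → 0 < E' x)
    (T : Matrix (Fin 3) (Fin 3) ℝ) (hT : T.IsSymm)
    (heq : projOp Ga Nbar Ev Ev' T = 0) :
    T = 0 ∧ projOp lam N E E' T = 0 := by
  -- symmetry of the coefficients of T in the eigenbasis
  have sym : ∀ k l, Nbar k ⬝ᵥ T *ᵥ Nbar l = Nbar l ⬝ᵥ T *ᵥ Nbar k := by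
    intro k l
    rw [dotProduct_mulVec]
    have : Nbar k ᵥ* T = T *ᵥ Nbar k := by
      conv_lhs => rw [← hT]
      exact vecMul_transpose T (Nbar k)
    rw [this, dotProduct_comm]
  -- strict monotonicity of Ev on positives
  have strict : StrictMonoOn Ev (Set.Ioi 0) := by
    apply strictMonoOn_of_deriv_pos (convex_Ioi 0)
    · exact fun x hx => (hEv x hx).continuousAt.continuousWithinAt
    · intro x hx
      rw [interior_Ioi] at hx
      rw [(hEv x hx).deriv]
      exact hEv' x hx
  have hck : ∀ k, Ev' (Ga k) / Ga k ≠ 0 :=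
    fun k => ne_of_gt (div_pos (hEv' _ (hGpos k)) (hGpos k))
  have hd : ∀ k l, k ≠ l →
      2 * (Ev (Ga k) - Ev (Ga l)) / ((Ga k) ^ 2 - (Ga l) ^ 2) ≠ 0 := by
    intro k l hkl
    have h1 : Ev (Ga k) ≠ Ev (Ga l) := fun h =>
      hGdist k l hkl (strict.injOn (hGpos k) (hGpos l) h)
    have h2 : (Ga k) ^ 2 ≠ (Ga l) ^ 2 := by
      intro h
      exact hGdist k l hkl (by nlinarith [hGpos k, hGpos l])
    exact div_ne_zero (mul_ne_zero two_ne_zero (sub_ne_zero.mpr h1)) (sub_ne_zero.mpr h2)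
  -- the equilibrium condition in components
  have h0 : ∀ k l,
      (if k = l then Ev' (Ga k) / Ga k * (Nbar k ⬝ᵥ T *ᵥ Nbar k)
       else if k < l then
         2 * (Ev (Ga k) - Ev (Ga l)) / ((Ga k) ^ 2 - (Ga l) ^ 2) * (Nbar k ⬝ᵥ T *ᵥ Nbar l)
       else
         2 * (Ev (Ga l) - Ev (Ga k)) / ((Ga l) ^ 2 - (Ga k) ^ 2) * (Nbar l ⬝ᵥ T *ᵥ Nbar k))
      = 0 := by
    intro k l
    have h1 := projOp_dot Ga Nbar Ev Ev' T hGON k l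
    rw [heq, key_eval] at h1
    simpa using h1.symm
  have tzero : ∀ k l, Nbar k ⬝ᵥ T *ᵥ Nbar l = 0 := by
    intro k l
    rcases lt_trichotomy k l with h | h | h
    · have := h0 k l
      rw [if_neg (ne_of_lt h), if_pos h] at this
      exact (mul_eq_zero.mp this).resolve_left (hd k l (ne_of_lt h))
    · subst h
      have := h0 k k
      rw [if_pos rfl] at this
      exact (mul_eq_zero.mp this).resolve_left (hck k)
    · have := h0 k l
      rw [if_neg (ne_of_lt h).symm, if_neg (not_lt.mpr h.le)] at this
      rw [sym]
      exact (mul_eq_zero.mp this).resolve_left (hd l k (ne_of_lt h))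
  -- from the vanishing coefficients, T = 0
  set P : Matrix (Fin 3) (Fin 3) ℝ := Matrix.of Nbar with hPdef
  have hP : P * Pᵀ = 1 := by
    ext i j
    have := hGON i j
    simpa [hPdef, mul_apply, one_apply, dotProduct, transpose_apply] using this
  have hP2 : Pᵀ * P = 1 := mul_eq_one_comm.mp hP
  have hmid : P * T * Pᵀ = 0 := by
    ext k l
    have := tzero k l
    simp only [mul_apply, Matrix.zero_apply, transpose_apply, hPdef, of_apply]
    rw [← this]
    simp [mulVec, dotProduct, Finset.mul_sum, Finset.sum_mul, mul_assoc]
    exact Finset.sum_comm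
  have hT0 : T = 0 := by
    calc T = (Pᵀ * P) * T * (Pᵀ * P) := by rw [hP2]; simp
    _ = Pᵀ * (P * T * Pᵀ) * P := by simp only [Matrix.mul_assoc]
    _ = 0 := by rw [hmid]; simp
  refine ⟨hT0, ?_⟩
  rw [hT0]
  simp [projOp]
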